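/- There exists a constant C > 0, depending only on α and d, such that for every x ∈ ℤ^d one has (1/ν_x) · Σ_{y ∈ ℤ^d, |y−x|_1 = 1} ρ(x,y)² μ_{xy} ≤ C. (In other words, ρ is an intrinsic metric for the weighted lattice.) -/

import Mathlib

open scoped BigOperators

/-- ℓ∞ norm on ℤ^d, as a natural number. -/
def linf {d : ℕ} (x : Fin d → ℤ) : ℕ :=
  Finset.univ.sup fun i => (x i).natAbs

/-- ℓ¹ norm on ℤ^d, as a natural number. -/
def l1 {d : ℕ} (x : Fin d → ℤ) : ℕ :=
  ∑ i, (x i).natAbs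

/-- `ν x = (max(|x|,1))^α`. -/
noncomputable def nu (α : ℝ) {d : ℕ} (x : Fin d → ℤ) : ℝ :=
  ((max (linf x) 1 : ℕ) : ℝ) ^ α

/-- The conductance `μ x y = (max(|x|,|y|))^(-α)` if `|x-y|₁ = 1`, and `0` otherwise. -/
noncomputable def mu (α : ℝ) {d : ℕ} (x y : Fin d → ℤ) : ℝ :=
  if l1 (x - y) = 1 then ((max (linf x) (linf y) : ℕ) : ℝ) ^ (-α) else 0

/-- `z 0, …, z m` is a path: consecutive points are at ℓ¹-distance one. -/
def IsPath {d : ℕ} (z : ℕ → Fin d → ℤ) (m : ℕ) : Prop :=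
  ∀ i < m, l1 (z (i + 1) - z i) = 1

/-- The metric `ρ(x,y)`: `0` if `x = y`, otherwise the infimum of `∑ ν (z i)` over
paths from `x` to `y`. -/
noncomputable def rho (α : ℝ) {d : ℕ} (x y : Fin d → ℤ) : ℝ :=
  if x = y then 0
  else sInf {S : ℝ | ∃ (m : ℕ) (z : ℕ → Fin d → ℤ), IsPath z m ∧ z 0 = x ∧ z m = y ∧
    S = ∑ i ∈ Finset.range (m + 1), nu α (z i)}

/-- `ρ_x(r) = (max(|x|,r))^α · r`. -/
noncomputable def rhox (α : ℝ) {d : ℕ} (x : Fin d → ℤ) (r : ℝ) : ℝ :=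
  (max ((linf x : ℕ) : ℝ) r) ^ α * r

/-- `ρ_x⁻¹(r) = (max(|x|, r^{1/(1+α)}))^{-α} · r`, the inverse function of `ρ_x`. -/
noncomputable def rhoxInv (α : ℝ) {d : ℕ} (x : Fin d → ℤ) (r : ℝ) : ℝ :=
  (max ((linf x : ℕ) : ℝ) (r ^ (1 / (1 + α)))) ^ (-α) * r

/-- `V(x,r) = ν(B(x,r))`, the ν-volume of the ℓ∞-ball of radius `r` about `x`. -/
noncomputable def V (α : ℝ) {d : ℕ} (x : Fin d → ℤ) (r : ℝ) : ℝ :=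
  ∑' y : {y : Fin d → ℤ // ((linf (y - x) : ℕ) : ℝ) ≤ r}, nu α y.1

/-- `V_ρ(x,r) = ν(B_ρ(x,r))`, the ν-volume of the ρ-ball of radius `r` about `x`. -/
noncomputable def Vrho (α : ℝ) {d : ℕ} (x : Fin d → ℤ) (r : ℝ) : ℝ :=
  ∑' y : {y : Fin d → ℤ // rho α x y ≤ r}, nu α y.1

lemma l1_sub_comm {d : ℕ} (x y : Fin d → ℤ) : l1 (x - y) = l1 (y - x) :=
  Finset.sum_congr rfl fun i _ => by
    rw [Pi.sub_apply, Pi.sub_apply, ← neg_sub, Int.natAbs_neg]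
lemma linf_le_l1 {d : ℕ} (e : Fin d → ℤ) : linf e ≤ l1 e := by
  unfold linf l1
  exact Finset.sup_le fun i _ =>
    Finset.single_le_sum (f := fun j => (e j).natAbs) (fun j _ => Nat.zero_le _) (Finset.mem_univ i)
lemma apply_eq_zero_of_linf {d : ℕ} {e : Fin d → ℤ} (h : linf e = 0) (i : Fin d) :
    e i = 0 := by
  have := (Finset.le_sup (f := fun i => (e i).natAbs) (Finset.mem_univ i)).trans_eq h
  simpa [Int.natAbs_eq_zero] using Nat.le_zero.mp this
lemma one_le_linf {d : ℕ} {e : Fin d → ℤ} (h : l1 e = 1) : 1 ≤ linf e := by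
  rcases Nat.eq_zero_or_pos (linf e) with h0 | h0
  · exfalso
    have : l1 e = 0 := Finset.sum_eq_zero fun i _ => by
      rw [apply_eq_zero_of_linf h0 i]; rfl
    omega
  · exact h0
lemma linf_triangle {d : ℕ} (x y : Fin d → ℤ) : linf y ≤ linf x + linf (y - x) := by
  refine Finset.sup_le fun i _ => ?_
  have h1 : (y i).natAbs = (x i + (y - x) i).natAbs := by
    congr 1; simp
  rw [h1]
  exact (Int.natAbs_add_le _ _).trans (Nat.add_le_add
    (Finset.le_sup (f := fun j => (x j).natAbs) (Finset.mem_univ i))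
    (Finset.le_sup (f := fun j => ((y - x) j).natAbs) (Finset.mem_univ i)))
lemma l1_single {d : ℕ} (i : Fin d) (v : ℤ) : l1 (Pi.single i v) = v.natAbs := by
  classical
  simp [l1, Pi.single_apply, apply_ite Int.natAbs, Finset.sum_ite_eq']
lemma l1_eq_one_exists {d : ℕ} (e : Fin d → ℤ) (h : l1 e = 1) :
    ∃ i, e = Pi.single i (e i) := by
  classical
  obtain ⟨i, _, hi⟩ := Finset.exists_ne_zero_of_sum_ne_zero (by rw [show (∑ j, (e j).natAbs) = 1 from h]; norm_num)
  refine ⟨i, funext fun j => ?_⟩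
  by_cases hji : j = i
  · subst hji; simp
  · have hsub : ({i, j} : Finset (Fin d)) ⊆ Finset.univ := Finset.subset_univ _
    have hpair : (e i).natAbs + (e j).natAbs ≤ l1 e := by
      unfold l1
      rw [← Finset.sum_pair (f := fun k => (e k).natAbs) (Ne.symm hji)]
      exact Finset.sum_le_sum_of_subset hsub
    have : (e j).natAbs = 0 := by omega
    rw [Pi.single_apply, if_neg hji]
    exact Int.natAbs_eq_zero.mp this
lemma rpow_comp {a b : ℝ} (α : ℝ) (ha : 1 ≤ a) (hb : 1 ≤ b) (h1 : b ≤ 2 * a)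
    (h2 : a ≤ 2 * b) : b ^ α ≤ 2 ^ |α| * a ^ α := by
  have ha0 : (0:ℝ) < a := by linarith
  have hb0 : (0:ℝ) < b := by linarith
  rcases le_or_gt 0 α with hα | hα
  · rw [abs_of_nonneg hα]
    calc b ^ α ≤ (2 * a) ^ α := Real.rpow_le_rpow hb0.le h1 hα
    _ = 2 ^ α * a ^ α := Real.mul_rpow (by norm_num) ha0.le
  · rw [abs_of_neg hα]
    have h3 : (2 * b) ^ α ≤ a ^ α := Real.rpow_le_rpow_of_nonpos ha0 h2 hα.le
    rw [Real.mul_rpow (by norm_num) hb0.le] at h3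
    have h2α : (0:ℝ) < 2 ^ α := Real.rpow_pos_of_pos (by norm_num) _
    rw [Real.rpow_neg (by norm_num : (0:ℝ) ≤ 2)]
    rw [le_inv_mul_iff₀ h2α]
    exact h3
lemma nu_nonneg (α : ℝ) {d : ℕ} (x : Fin d → ℤ) : 0 ≤ nu α x :=
  Real.rpow_nonneg (Nat.cast_nonneg _) _
lemma nu_pos (α : ℝ) {d : ℕ} (x : Fin d → ℤ) : 0 < nu α x := by
  apply Real.rpow_pos_of_pos
  have : 1 ≤ max (linf x) 1 := le_max_right _ _
  exact_mod_cast Nat.lt_of_lt_of_le Nat.zero_lt_one this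
section rho
variable {d : ℕ} (α : ℝ) {x y : Fin d → ℤ}
lemma mem_rho_set (hy : l1 (y - x) = 1) :
    nu α x + nu α y ∈ {S : ℝ | ∃ (m : ℕ) (z : ℕ → Fin d → ℤ),
      IsPath z m ∧ z 0 = x ∧ z m = y ∧
      S = ∑ i ∈ Finset.range (m + 1), nu α (z i)} := by
  refine ⟨1, fun n => if n = 0 then x else y, ?_, by simp, by simp, ?_⟩
  · intro i hi
    have : i = 0 := by omega
    subst this
    simpa using hy
  · rw [Finset.sum_range_succ, Finset.sum_range_one]
    simp
lemma rho_set_bddBelow : BddBelow {S : ℝ | ∃ (m : ℕ) (z : ℕ → Fin d → ℤ),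
    IsPath z m ∧ z 0 = x ∧ z m = y ∧
    S = ∑ i ∈ Finset.range (m + 1), nu α (z i)} := by
  refine ⟨0, fun S hS => ?_⟩
  obtain ⟨m, z, _, _, _, rfl⟩ := hS
  exact Finset.sum_nonneg fun i _ => nu_nonneg α _
lemma rho_nonneg (hy : l1 (y - x) = 1) : 0 ≤ rho α x y := by
  unfold rho
  split
  · exact le_refl 0
  · exact le_csInf ⟨_, mem_rho_set α hy⟩ fun S hS => by
      obtain ⟨m, z, _, _, _, rfl⟩ := hS
      exact Finset.sum_nonneg fun i _ => nu_nonneg α _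
lemma rho_le (hy : l1 (y - x) = 1) : rho α x y ≤ nu α x + nu α y := by
  have hne : x ≠ y := by
    rintro rfl
    simp [l1] at hy
  rw [rho, if_neg hne]
  exact csInf_le (rho_set_bddBelow α) (mem_rho_set α hy)
end rho
lemma term_bound (α : ℝ) {d : ℕ} {x y : Fin d → ℤ} (hy : l1 (y - x) = 1) :
    rho α x y ^ 2 * mu α x y ≤ (1 + 2 ^ |α|) ^ 2 * 2 ^ |α| * nu α x := by
  set t : ℝ := 2 ^ |α| with ht
  have ht0 : 0 < t := Real.rpow_pos_of_pos two_pos _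
  -- nat facts
  have hyx1 : linf (y - x) ≤ 1 := hy ▸ linf_le_l1 _
  have hxy1 : linf (x - y) ≤ 1 := by
    calc linf (x - y) ≤ l1 (x - y) := linf_le_l1 _
    _ = 1 := (l1_sub_comm x y).trans hy
  have htri1 : linf y ≤ linf x + 1 := (linf_triangle x y).trans (by omega)
  have htri2 : linf x ≤ linf y + 1 := (linf_triangle y x).trans (by omega)
  have hnz : ¬(linf x = 0 ∧ linf y = 0) := by
    rintro ⟨hlx, hly⟩
    have h0 : linf (y - x) = 0 := by
      refine Nat.le_zero.mp (Finset.sup_le fun i _ => ?_)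
      rw [Pi.sub_apply, apply_eq_zero_of_linf hly i, apply_eq_zero_of_linf hlx i]
      exact Nat.le_refl 0
    have := one_le_linf hy
    omega
  set A := max (linf x) 1 with hA
  set B := max (linf y) 1 with hB
  set K := max (linf x) (linf y) with hK
  have hA1 : (1:ℝ) ≤ (A:ℝ) := by exact_mod_cast (le_max_right _ 1 : 1 ≤ A)
  have hB1 : (1:ℝ) ≤ (B:ℝ) := by exact_mod_cast (le_max_right _ 1 : 1 ≤ B)
  have hK1 : (1:ℝ) ≤ (K:ℝ) := by
    have : 1 ≤ K := by omega
    exact_mod_cast this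
  have hBA : (B:ℝ) ≤ 2 * A := by
    have : B ≤ 2 * A := by omega
    exact_mod_cast this
  have hAB : (A:ℝ) ≤ 2 * B := by
    have : A ≤ 2 * B := by omega
    exact_mod_cast this
  have hKA : (K:ℝ) ≤ 2 * A := by
    have : K ≤ 2 * A := by omega
    exact_mod_cast this
  have hAK : (A:ℝ) ≤ 2 * K := by
    have : A ≤ 2 * K := by omega
    exact_mod_cast this
  have hA0 : (0:ℝ) < (A:ℝ) := lt_of_lt_of_le one_pos hA1
  -- real comparisons
  have hb : (B:ℝ) ^ α ≤ t * (A:ℝ) ^ α := rpow_comp α hA1 hB1 hBA hAB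
  have hk : (K:ℝ) ^ (-α) ≤ t * (A:ℝ) ^ (-α) := by
    have := rpow_comp (-α) hA1 hK1 hKA hAK
    rwa [abs_neg] at this
  have hmu : mu α x y = (K:ℝ) ^ (-α) := by
    rw [mu, if_pos ((l1_sub_comm x y).trans hy)]
  have hnux : nu α x = (A:ℝ) ^ α := rfl
  have hnuy : nu α y = (B:ℝ) ^ α := rfl
  have hr : rho α x y ≤ (A:ℝ) ^ α + (B:ℝ) ^ α := by
    have := rho_le α hy
    rwa [hnux, hnuy] at this
  have hr0 : 0 ≤ rho α x y := rho_nonneg α hy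
  have hsum : (A:ℝ) ^ α + (B:ℝ) ^ α ≤ (1 + t) * (A:ℝ) ^ α := by
    rw [add_mul, one_mul]
    exact add_le_add_right hb _
  have hpow : ((A:ℝ) ^ α) ^ 2 * (A:ℝ) ^ (-α) = (A:ℝ) ^ α := by
    rw [sq, mul_assoc, ← Real.rpow_add hA0]
    norm_num
  rw [hmu, hnux]
  calc rho α x y ^ 2 * (K:ℝ) ^ (-α)
      ≤ ((1 + t) * (A:ℝ) ^ α) ^ 2 * (t * (A:ℝ) ^ (-α)) := by
        apply mul_le_mul _ hk (Real.rpow_nonneg (Nat.cast_nonneg _) _) (by positivity)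
        exact pow_le_pow_left₀ hr0 (hr.trans hsum) 2
    _ = (1 + t) ^ 2 * t * (((A:ℝ) ^ α) ^ 2 * (A:ℝ) ^ (-α)) := by ring
    _ = (1 + t) ^ 2 * t * (A:ℝ) ^ α := by rw [hpow]

/-- `ρ` is an intrinsic metric: there is a constant `C > 0`,
depending only on `α` and `d`, such that for every `x ∈ ℤ^d`,
`(1/ν_x) ∑_{y : |y-x|₁=1} ρ(x,y)² μ_{xy} ≤ C`. -/
theorem intrinsic_metric (d : ℕ) (hd : 1 ≤ d) (α : ℝ) (hα : -1 < α) :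
    ∃ C : ℝ, 0 < C ∧ ∀ x : Fin d → ℤ,
      (1 / nu α x) *
        (∑' y : {y : Fin d → ℤ // l1 (y - x) = 1}, rho α x y.1 ^ 2 * mu α x y.1) ≤ C := by
  classical
  set t : ℝ := 2 ^ |α| with ht
  have ht0 : 0 < t := Real.rpow_pos_of_pos two_pos _
  set c : ℝ := (1 + t) ^ 2 * t with hc
  have hc0 : 0 < c := by positivity
  have hd0 : (0:ℝ) < (d:ℝ) := by exact_mod_cast hd
  refine ⟨2 * d * c, by positivity, fun x => ?_⟩
  -- surjection from Fin d × Bool onto the neighbors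
  have hmem : ∀ (i : Fin d) (b : Bool),
      l1 ((x + Pi.single i (if b then 1 else -1)) - x) = 1 := by
    intro i b
    have h1 : (x + Pi.single i (if b then (1:ℤ) else -1)) - x
        = Pi.single i (if b then (1:ℤ) else -1) := by
      funext j; simp
    rw [h1, l1_single]
    cases b <;> simp
  let g : Fin d × Bool → {y : Fin d → ℤ // l1 (y - x) = 1} :=
    fun p => ⟨x + Pi.single p.1 (if p.2 then 1 else -1), hmem p.1 p.2⟩
  have hg : Function.Surjective g := by
    rintro ⟨y, hy⟩
    obtain ⟨i, hi⟩ := l1_eq_one_exists _ hy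
    have hv : ((y - x) i).natAbs = 1 := by
      have h2 := hy
      rw [hi, l1_single] at h2
      exact h2
    have hv' : (y - x) i = 1 ∨ (y - x) i = -1 := by
      rcases Int.natAbs_eq ((y - x) i) with h | h <;> rw [hv] at h <;> simp [h]
    rcases hv' with h1 | h1
    · refine ⟨(i, true), Subtype.ext ?_⟩
      show x + Pi.single i (if true then (1:ℤ) else -1) = y
      rw [if_pos rfl, ← h1, ← hi]
      abel
    · refine ⟨(i, false), Subtype.ext ?_⟩
      show x + Pi.single i (if false then (1:ℤ) else -1) = y
      rw [if_neg (by simp), ← h1, ← hi]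
      abel
  haveI : Finite {y : Fin d → ℤ // l1 (y - x) = 1} := Finite.of_surjective g hg
  haveI : Fintype {y : Fin d → ℤ // l1 (y - x) = 1} := Fintype.ofFinite _
  have hcard : Fintype.card {y : Fin d → ℤ // l1 (y - x) = 1} ≤ 2 * d := by
    have := Fintype.card_le_of_surjective g hg
    simpa [mul_comm] using this
  rw [one_div, inv_mul_le_iff₀ (nu_pos α x), tsum_fintype]
  calc ∑ y : {y : Fin d → ℤ // l1 (y - x) = 1}, rho α x y.1 ^ 2 * mu α x y.1
      ≤ (Finset.univ : Finset {y : Fin d → ℤ // l1 (y - x) = 1}).card • (c * nu α x) := by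
        refine Finset.sum_le_card_nsmul _ _ _ fun y _ => ?_
        exact term_bound α y.2
    _ = (Fintype.card {y : Fin d → ℤ // l1 (y - x) = 1} : ℝ) * (c * nu α x) := by
        rw [Finset.card_univ, nsmul_eq_mul]
    _ ≤ (2 * d : ℝ) * (c * nu α x) := by
        refine mul_le_mul_of_nonneg_right ?_ (mul_nonneg hc0.le (nu_nonneg α x))
        exact_mod_cast hcard
    _ = nu α x * (2 * d * c) := by ring
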